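/- Let f : ℝ^d → ℝ be twice differentiable and satisfy the cubic Taylor upper bound with constant H > 0 at every point. Fix x ∈ ℝ^d and M ≥ H, and let T be a global minimizer over y ∈ ℝ^d of the cubic model m(y) = f(x) + ⟨∇f(x), y−x⟩ + ½⟨∇²f(x)(y−x), y−x⟩ + (M/3)‖y−x‖³. Then for every y ∈ ℝ^d: f(T) ≤ f(y) + ((H + M)/3)·‖y − x‖³. -/

import Mathlib

open scoped RealInnerProductSpace

open Set Filter

set_option linter.unreachableTactic false
set_option linter.unusedTactic false

/-- 1-D core: a one-sided cubic Taylor upper bound at every pair of points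
implies the corresponding lower bound between 0 and 1. -/
lemma one_dim_lower (ψ ψ1 ψ2 : ℝ → ℝ) (c : ℝ)
    (hd1 : ∀ t, HasDerivAt ψ (ψ1 t) t)
    (hd2 : ∀ t, HasDerivAt ψ1 (ψ2 t) t)
    (hC : ∀ s t : ℝ, ψ t ≤ ψ s + (t - s) * ψ1 s + (t - s)^2/2 * ψ2 s + c * |t - s|^3) :
    ψ 0 + ψ1 0 + ψ2 0 / 2 - c ≤ ψ 1 := by
  set w : ℝ → ℝ := fun t => ψ t - ψ 0 - t * ψ1 0 - t^2/2 * ψ2 0 + c*t^3 with hw_def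
  set w1 : ℝ → ℝ := fun t => ψ1 t - ψ1 0 - t * ψ2 0 + 3*c*t^2 with hw1_def
  set w2 : ℝ → ℝ := fun t => ψ2 t - ψ2 0 + 6*c*t with hw2_def
  have hw : ∀ t, HasDerivAt w (w1 t) t := by
    intro t
    have h1 : HasDerivAt (fun t : ℝ => t * ψ1 0) (ψ1 0) t := by
      simpa using (hasDerivAt_id t).mul_const (ψ1 0)
    have h2 : HasDerivAt (fun t : ℝ => t^2/2 * ψ2 0) (t * ψ2 0) t := by
      have := ((hasDerivAt_pow 2 t).div_const 2).mul_const (ψ2 0)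
      refine this.congr_deriv ?_
      all_goals (push_cast; try ring)
    have h3 : HasDerivAt (fun t : ℝ => c * t^3) (3*c*t^2) t := by
      have := (hasDerivAt_pow 3 t).const_mul c
      refine this.congr_deriv ?_
      all_goals (push_cast; try ring)
    have := ((((hd1 t).sub_const (ψ 0)).sub h1).sub h2).add h3
    refine this.congr_deriv ?_
    all_goals (simp only [hw1_def]; try ring)
  have hw1 : ∀ t, HasDerivAt w1 (w2 t) t := by
    intro t
    have h1 : HasDerivAt (fun t : ℝ => t * ψ2 0) (ψ2 0) t := by
      simpa using (hasDerivAt_id t).mul_const (ψ2 0)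
    have h3 : HasDerivAt (fun t : ℝ => 3*c*t^2) (6*c*t) t := by
      have := (hasDerivAt_pow 2 t).const_mul (3*c)
      refine this.congr_deriv ?_
      all_goals (push_cast; try ring)
    have := (((hd2 t).sub_const (ψ1 0)).sub h1).add h3
    refine this.congr_deriv ?_
    all_goals (simp only [hw2_def]; try ring)
  have hw0 : w 0 = 0 := by simp [hw_def]
  have hw10 : w1 0 = 0 := by simp [hw1_def]
  have hw20 : w2 0 = 0 := by simp [hw2_def]
  -- backward exact quadratic bound
  have hB : ∀ s t : ℝ, t ≤ s → w t ≤ w s - (s - t) * w1 s + (s-t)^2/2 * w2 s := by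
    intro s t hts
    have hC' := hC s t
    rw [abs_of_nonpos (by linarith : t - s ≤ 0)] at hC'
    simp only [hw_def, hw1_def, hw2_def]
    nlinarith [hC']
  -- forward bound from 0
  have hF : ∀ t : ℝ, 0 ≤ t → w t ≤ 2*c*t^3 := by
    intro t ht
    have hC' := hC 0 t
    rw [abs_of_nonneg (by linarith : (0:ℝ) ≤ t - 0)] at hC'
    simp only [hw_def]
    nlinarith [hC']
  set η : ℝ → ℝ := fun u => w u - u * w1 u with hη_def
  have hdη : ∀ u, HasDerivAt η (-(u * w2 u)) u := by
    intro u
    have h1 : HasDerivAt (fun u : ℝ => u * w1 u) (1 * w1 u + u * w2 u) u :=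
      (hasDerivAt_id u).mul (hw1 u)
    have := (hw u).sub h1
    refine this.congr_deriv ?_
    ring
  set ρ : ℝ → ℝ := fun u => η u / u^2 with hρ_def
  have key : ∀ u : ℝ, 0 < u → 0 ≤ 2 * η u + u^2 * w2 u := by
    intro u hu
    have h := hB u 0 (le_of_lt hu)
    rw [hw0] at h
    simp only [hη_def]
    ring_nf at h ⊢
    linarith
  have hdρ : ∀ u : ℝ, 0 < u →
      HasDerivAt ρ ((-(u * w2 u) * u^2 - η u * (2*u)) / (u^2)^2) u := by
    intro u hu
    have h2 : HasDerivAt (fun u : ℝ => u^2) (2*u) u := by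
      simpa using hasDerivAt_pow 2 u
    exact (hdη u).div h2 (by positivity)
  have hρ_nonpos_deriv : ∀ u : ℝ, 0 < u → deriv ρ u ≤ 0 := by
    intro u hu
    rw [(hdρ u hu).deriv]
    apply div_nonpos_of_nonpos_of_nonneg _ (by positivity)
    nlinarith [key u hu]
  have hanti : AntitoneOn ρ (Ioi (0:ℝ)) := by
    apply antitoneOn_of_deriv_nonpos (convex_Ioi 0)
    · intro u hu
      exact ((hdρ u hu).differentiableAt).continuousAt.continuousWithinAt
    · intro u hu
      rw [interior_Ioi] at hu
      exact ((hdρ u hu).differentiableAt).differentiableWithinAt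
    · intro u hu
      rw [interior_Ioi] at hu
      exact hρ_nonpos_deriv u hu
  -- slope of w1 at 0 tends to w2 0 = 0
  have hslope : Tendsto (fun v : ℝ => w1 v / v) (nhdsWithin 0 (Ioi 0)) (nhds 0) := by
    have h0 := hw1 0
    rw [hw20, hasDerivAt_iff_tendsto_slope] at h0
    have hmono : nhdsWithin (0:ℝ) (Ioi 0) ≤ nhdsWithin 0 {(0:ℝ)}ᶜ :=
      nhdsWithin_mono 0 (fun v hv => ne_of_gt hv)
    have := h0.mono_left hmono
    apply this.congr'
    filter_upwards [self_mem_nhdsWithin] with v hv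
    simp [slope_def_field, hw10]
  have hρ_nonpos : ∀ u : ℝ, 0 < u → ρ u ≤ 0 := by
    intro u hu
    by_contra hpos
    push_neg at hpos
    have htend : Tendsto (fun v : ℝ => 2*c*v - w1 v / v) (nhdsWithin 0 (Ioi 0)) (nhds 0) := by
      have h1 : Tendsto (fun v : ℝ => 2*c*v) (nhdsWithin 0 (Ioi 0)) (nhds 0) := by
        have : Tendsto (fun v : ℝ => 2*c*v) (nhds 0) (nhds (2*c*0)) :=
          (continuous_const.mul continuous_id).tendsto 0
        simpa using this.mono_left nhdsWithin_le_nhds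
      simpa using h1.sub hslope
    have hev1 : ∀ᶠ v in nhdsWithin (0:ℝ) (Ioi 0), 2*c*v - w1 v / v < ρ u :=
      htend.eventually_lt_const hpos
    have hev2 : Ioo (0:ℝ) u ∈ nhdsWithin (0:ℝ) (Ioi 0) :=
      Ioo_mem_nhdsGT_of_mem (by constructor <;> simp [hu])
    obtain ⟨v, hv1, hv2⟩ := (hev1.and hev2).exists
    have hv0 : 0 < v := hv2.1
    have hvu : v ≤ u := le_of_lt hv2.2
    have hρv : ρ v ≤ 2*c*v - w1 v / v := by
      have hηv : η v ≤ 2*c*v^3 - v * w1 v := by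
        have := hF v (le_of_lt hv0)
        simp only [hη_def]; linarith
      have : ρ v ≤ (2*c*v^3 - v * w1 v) / v^2 := by
        simp only [hρ_def]
        gcongr
        all_goals positivity
      calc ρ v ≤ (2*c*v^3 - v * w1 v) / v^2 := this
        _ = 2*c*v - w1 v / v := by
            field_simp
            try ring
    have := hanti (mem_Ioi.mpr hv0) (mem_Ioi.mpr hu) hvu
    linarith
  have hw2_nonneg : ∀ u : ℝ, 0 < u → 0 ≤ w2 u := by
    intro u hu
    have hk := key u hu
    have hηu : η u ≤ 0 := by
      have hle := hρ_nonpos u hu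
      simp only [hρ_def] at hle
      have heq : η u = (η u / u^2) * u^2 := by field_simp
      rw [heq]
      exact mul_nonpos_iff.mpr (Or.inr ⟨hle, sq_nonneg u⟩)
    nlinarith [mul_pos hu hu]
  have hmono1 : MonotoneOn w1 (Ici (0:ℝ)) := by
    apply monotoneOn_of_deriv_nonneg (convex_Ici 0)
    · exact fun u _ => (hw1 u).differentiableAt.continuousAt.continuousWithinAt
    · intro u _
      exact (hw1 u).differentiableAt.differentiableWithinAt
    · intro u hu
      rw [interior_Ici] at hu
      rw [(hw1 u).deriv]
      exact hw2_nonneg u hu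
  have hw1_nonneg : ∀ u : ℝ, 0 ≤ u → 0 ≤ w1 u := by
    intro u hu
    have := hmono1 (self_mem_Ici) (mem_Ici.mpr hu) hu
    rwa [hw10] at this
  have hmonow : MonotoneOn w (Ici (0:ℝ)) := by
    apply monotoneOn_of_deriv_nonneg (convex_Ici 0)
    · exact fun u _ => (hw u).differentiableAt.continuousAt.continuousWithinAt
    · intro u _
      exact (hw u).differentiableAt.differentiableWithinAt
    · intro u hu
      rw [interior_Ici] at hu
      rw [(hw u).deriv]
      exact hw1_nonneg u (le_of_lt hu)
  have hfin : w 0 ≤ w 1 := hmonow self_mem_Ici (mem_Ici.mpr zero_le_one) zero_le_one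
  rw [hw0] at hfin
  simp only [hw_def] at hfin
  norm_num at hfin
  linarith

section helpers

variable {d : ℕ}

lemma grad_inner_eq (f : EuclideanSpace ℝ (Fin d) → ℝ) (z v : EuclideanSpace ℝ (Fin d)) :
    ⟪gradient f z, v⟫ = fderiv ℝ f z v := by
  rw [gradient, ← InnerProductSpace.toDual_apply_apply,
    (InnerProductSpace.toDual ℝ (EuclideanSpace ℝ (Fin d))).apply_symm_apply]

lemma line_hasDerivAt (x h : EuclideanSpace ℝ (Fin d)) (t : ℝ) :
    HasDerivAt (fun t : ℝ => x + t • h) h t := by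
  simpa using ((hasDerivAt_id t).smul_const h).const_add x

/-- The lower cubic Taylor bound, derived from the global upper bound. -/
lemma lower_taylor (f : EuclideanSpace ℝ (Fin d) → ℝ)
    (hf : Differentiable ℝ f) (hf' : Differentiable ℝ (gradient f))
    (H : ℝ)
    (hTaylor : ∀ x y : EuclideanSpace ℝ (Fin d),
      f y ≤ f x + ⟪gradient f x, y - x⟫
        + (1/2) * ⟪fderiv ℝ (gradient f) x (y - x), y - x⟫ + (H/3) * ‖y - x‖^3)
    (x y : EuclideanSpace ℝ (Fin d)) :
    f x + ⟪gradient f x, y - x⟫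
      + (1/2) * ⟪fderiv ℝ (gradient f) x (y - x), y - x⟫
      ≤ f y + (H/3) * ‖y - x‖^3 := by
  set v : EuclideanSpace ℝ (Fin d) := y - x with hv
  set ψ : ℝ → ℝ := fun t => f (x + t • v) with hψ_def
  set ψ1 : ℝ → ℝ := fun t => ⟪gradient f (x + t • v), v⟫ with hψ1_def
  set ψ2 : ℝ → ℝ := fun t => ⟪fderiv ℝ (gradient f) (x + t • v) v, v⟫ with hψ2_def
  have hd1 : ∀ t, HasDerivAt ψ (ψ1 t) t := by
    intro t
    have h := (hf (x + t • v)).hasFDerivAt.comp_hasDerivAt t (line_hasDerivAt x v t)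
    rw [← grad_inner_eq] at h
    exact h
  have hd2 : ∀ t, HasDerivAt ψ1 (ψ2 t) t := by
    intro t
    have hG : HasDerivAt (fun t : ℝ => gradient f (x + t • v))
        (fderiv ℝ (gradient f) (x + t • v) v) t :=
      by have h := (hf' (x + t • v)).hasFDerivAt.comp_hasDerivAt t (line_hasDerivAt x v t); exact h
    have h2 := HasDerivAt.inner ℝ hG (hasDerivAt_const t v)
    rw [inner_zero_right, zero_add] at h2
    exact h2
  have hC : ∀ s t : ℝ, ψ t ≤ ψ s + (t - s) * ψ1 s + (t - s)^2/2 * ψ2 s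
      + ((H/3) * ‖v‖^3) * |t - s|^3 := by
    intro s t
    have hT := hTaylor (x + s • v) (x + t • v)
    have hdiff : (x + t • v) - (x + s • v) = (t - s) • v := by
      rw [sub_smul]; abel
    rw [hdiff] at hT
    rw [real_inner_smul_right, ContinuousLinearMap.map_smul, inner_smul_left,
      real_inner_smul_right, norm_smul] at hT
    simp only [RCLike.conj_to_real, Real.norm_eq_abs] at hT
    calc ψ t ≤ ψ s + (t - s) * ψ1 s + 1/2 * ((t-s) * ((t-s) * ψ2 s))
          + H/3 * (|t - s| * ‖v‖)^3 := hT
      _ = ψ s + (t - s) * ψ1 s + (t - s)^2/2 * ψ2 s + ((H/3) * ‖v‖^3) * |t - s|^3 := by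
          ring
  have hmain := one_dim_lower ψ ψ1 ψ2 ((H/3) * ‖v‖^3) hd1 hd2 hC
  have e0 : ψ 0 = f x := by simp [hψ_def]
  have e1 : ψ 1 = f y := by simp [hψ_def, hv]
  have e2 : ψ1 0 = ⟪gradient f x, y - x⟫ := by simp [hψ1_def, hv]
  have e3 : ψ2 0 = ⟪fderiv ℝ (gradient f) x (y - x), y - x⟫ := by simp [hψ2_def, hv]
  rw [e0, e1, e2, e3] at hmain
  linarith

end helpers


/-- the cubic-model minimizer `T` satisfies
`f(T) ≤ f(y) + ((H+M)/3)‖y−x‖³` for all `y`. -/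
theorem cubic_model_minimizer_bound {d : ℕ}
    (f : EuclideanSpace ℝ (Fin d) → ℝ)
    (hf : Differentiable ℝ f) (hf' : Differentiable ℝ (gradient f))
    (H : ℝ) (hH : 0 < H)
    (hTaylor : ∀ x y : EuclideanSpace ℝ (Fin d),
      f y ≤ f x + ⟪gradient f x, y - x⟫
        + (1/2) * ⟪fderiv ℝ (gradient f) x (y - x), y - x⟫ + (H/3) * ‖y - x‖^3)
    (x : EuclideanSpace ℝ (Fin d)) (M : ℝ) (hM : H ≤ M)
    (m : EuclideanSpace ℝ (Fin d) → ℝ)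
    (hm : ∀ y, m y = f x + ⟪gradient f x, y - x⟫
      + (1/2) * ⟪fderiv ℝ (gradient f) x (y - x), y - x⟫ + (M/3) * ‖y - x‖^3)
    (T : EuclideanSpace ℝ (Fin d)) (hT : ∀ y, m T ≤ m y) :
    ∀ y, f T ≤ f y + ((H + M)/3) * ‖y - x‖^3 := by
  intro y
  have h1 : f T ≤ m T := by
    rw [hm T]
    have h0 := hTaylor x T
    have hnn : (0:ℝ) ≤ ‖T - x‖^3 := by positivity
    nlinarith [h0]
  have h2 : m T ≤ m y := hT y
  have h3 : m y ≤ f y + ((H + M)/3) * ‖y - x‖^3 := by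
    rw [hm y]
    have := lower_taylor f hf hf' H hTaylor x y
    linarith
  linarith
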